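/- Let r, d be natural numbers and let w : Fin (d+1) → Equiv.Perm (Fin r) be a non-degenerate tuple of permutations (i.e. w i ≠ w (i+1) for every adjacent pair of indices i). Then d is at most the sum, over all unordered pairs of distinct elements j, k of Fin r, of the variation counts μ_{j,k}(w). In other words, the homological degree of a non-degenerate Barratt–Eccles element is bounded by its total number of variations. -/

import Mathlib

open Classical in
/-- The variation count `μ_{j,k}` of a tuple of permutations: the number of indices `i`
such that the relative order in which `j` and `k` occur in the value sequence of `w i`
differs from that of `w (i+1)`. -/
noncomputable def variationCount {r d : ℕ} (w : Fin (d + 1) → Equiv.Perm (Fin r))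
    (j k : Fin r) : ℕ :=
  (Finset.univ.filter fun i : Fin d =>
    (((w i.castSucc)⁻¹ j < (w i.castSucc)⁻¹ k) ≠
      ((w i.succ)⁻¹ j < (w i.succ)⁻¹ k))).card

theorem Equiv.Perm.inv_apply_self {α : Type*} (f : Equiv.Perm α) (x : α) : f⁻¹ (f x) = x :=
  f.symm_apply_apply x

theorem Equiv.Perm.apply_inv_self {α : Type*} (f : Equiv.Perm α) (x : α) : f (f⁻¹ x) = x :=
  f.apply_symm_apply x

lemma exists_pair_of_ne {r : ℕ} (σ τ : Equiv.Perm (Fin r)) (hne : σ ≠ τ) :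
    ∃ j k : Fin r, j < k ∧ ((σ⁻¹ j < σ⁻¹ k) ≠ (τ⁻¹ j < τ⁻¹ k)) := by
  by_contra hc
  push_neg at hc
  apply hne
  have hmono : StrictMono (fun x => τ⁻¹ (σ x)) := by
    intro x y hxy
    rcases lt_trichotomy (σ x) (σ y) with hs | hs | hs
    · have := hc (σ x) (σ y) hs
      simp only [Equiv.Perm.inv_apply_self] at this
      rw [eq_iff_iff] at this
      exact this.mp hxy
    · exact absurd (σ.injective hs) (ne_of_lt hxy)
    · have := hc (σ y) (σ x) hs
      simp only [Equiv.Perm.inv_apply_self] at this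
      rw [eq_iff_iff] at this
      have hne' : (fun x => τ⁻¹ (σ x)) x ≠ (fun x => τ⁻¹ (σ x)) y := by
        simp only []
        exact fun h => (ne_of_lt hxy) (σ.injective (τ.symm.injective h))
      have hnlt : ¬ (τ⁻¹ (σ y) < τ⁻¹ (σ x)) := by
        rw [← this]; exact asymm hxy
      exact lt_of_le_of_ne (not_lt.mp hnlt) hne'
  have hid : (fun x => τ⁻¹ (σ x)) = id := by
    have inst : WellFoundedLT (Fin r) := inferInstance
    apply (@StrictMono.range_inj (Fin r) (Fin r) _ _ inst _ id hmono strictMono_id).1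
    rw [Set.range_id, Set.range_eq_univ]
    exact (σ.trans τ.symm).surjective
  apply Equiv.ext
  intro x
  have h2 := congrFun hid x
  simp only [id] at h2
  calc σ x = τ (τ⁻¹ (σ x)) := (Equiv.Perm.apply_inv_self τ (σ x)).symm
    _ = τ x := by rw [h2]


/-- The homological degree of a non-degenerate Barratt–Eccles element is bounded by its
total number of variations: `d` is at most the sum, over all unordered pairs of distinct
elements `j, k` of `Fin r`, of the variation counts `μ_{j,k}(w)`. -/
theorem degree_le_total_variations (r d : ℕ)
    (w : Fin (d + 1) → Equiv.Perm (Fin r))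
    (hw : ∀ i : Fin d, w i.castSucc ≠ w i.succ) :
    d ≤ ∑ p ∈ Finset.univ.filter (fun p : Fin r × Fin r => p.1 < p.2),
          variationCount w p.1 p.2 := by
  classical
  have hrw : ∀ p : Fin r × Fin r, variationCount w p.1 p.2 =
      ∑ i : Fin d, if (((w i.castSucc)⁻¹ p.1 < (w i.castSucc)⁻¹ p.2) ≠
        ((w i.succ)⁻¹ p.1 < (w i.succ)⁻¹ p.2)) then 1 else 0 := by
    intro p
    rw [variationCount, Finset.card_filter]
  simp only [hrw]
  rw [Finset.sum_comm]
  have : ∀ i : Fin d, 1 ≤ ∑ p ∈ Finset.univ.filter (fun p : Fin r × Fin r => p.1 < p.2),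
      (if (((w i.castSucc)⁻¹ p.1 < (w i.castSucc)⁻¹ p.2) ≠
        ((w i.succ)⁻¹ p.1 < (w i.succ)⁻¹ p.2)) then 1 else 0) := by
    intro i
    obtain ⟨j, k, hjk, hvar⟩ := exists_pair_of_ne _ _ (hw i)
    have hmem : (j, k) ∈ Finset.univ.filter (fun p : Fin r × Fin r => p.1 < p.2) := by
      simp [hjk]
    have h1 := Finset.single_le_sum (f := fun p : Fin r × Fin r =>
      (if (((w i.castSucc)⁻¹ p.1 < (w i.castSucc)⁻¹ p.2) ≠
        ((w i.succ)⁻¹ p.1 < (w i.succ)⁻¹ p.2)) then 1 else 0)) (fun _ _ => Nat.zero_le _) hmem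
    exact le_trans (le_of_eq (if_pos hvar).symm) h1
  calc d = ∑ _i : Fin d, 1 := by simp
    _ ≤ _ := Finset.sum_le_sum (fun i _ => this i)
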